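/- Let G be the graph obtained from the rooted (k+1)-ary tree by adding, for each vertex, a once-subdivided complete graph K_{k+1} on its k+1 successors, iterated over all subdividing vertices as in the construction. Then every finite subgraph H of G has a vertex of degree at most 2: if v is a vertex of H of maximal height and v is incident in H with a horizontal (subdivided-complete-graph) edge vw, then v or w has degree at most 2 in H; otherwise v has degree at most 1 in H. -/

import Mathlib

open SimpleGraph Set

universe u
variable {V : Type u}

/-- A graph is locally finite if every vertex has finite neighbourhood. -/
def LocFin (G : SimpleGraph V) : Prop := ∀ v, (G.neighborSet v).Finite

/-- The vertex boundary `V⁺(U)`: vertices of `U` with a neighbour outside `U`. -/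
def vBdry (G : SimpleGraph V) (U : Set V) : Set V :=
  {v | v ∈ U ∧ ∃ w, w ∉ U ∧ G.Adj v w}

/-- The neighbourhood `N(U)` of a vertex set `U`: vertices outside `U` adjacent to `U`. -/
def nbhd (G : SimpleGraph V) (U : Set V) : Set V :=
  {w | w ∉ U ∧ ∃ v ∈ U, G.Adj v w}

/-- Degree of `v` in the subgraph of `G` induced on the vertex set `A`. -/
noncomputable def degIn (G : SimpleGraph V) (A : Set V) (v : V) : ℕ :=
  (A ∩ G.neighborSet v).ncard

/-- `C` is (the vertex set of) a component of `G - S`. -/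
def IsCompOf (G : SimpleGraph V) (S C : Set V) : Prop :=
  C.Nonempty ∧ C ∩ S = ∅ ∧ (G.induce C).Connected ∧
    ∀ v ∈ C, ∀ w, w ∉ S → G.Adj v w → w ∈ C

/-- A region of `G`: a (nonempty) connected induced subgraph with finite vertex boundary. -/
def IsRegion (G : SimpleGraph V) (C : Set V) : Prop :=
  (G.induce C).Connected ∧ (vBdry G C).Finite

/-- `δ⁺_G(C) ≥ k`: every boundary vertex of `C` has degree at least `k`
in the graph `G[S, C]` induced on `N(C) ∪ V⁺(C)`. -/
def minOutDegGE (G : SimpleGraph V) (C : Set V) (k : ℕ) : Prop :=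
  ∀ v ∈ vBdry G C, k ≤ degIn G (nbhd G C ∪ vBdry G C) v

/-- `f : ℕ → V` is a ray (one-way infinite path) in `G`. -/
def IsRay (G : SimpleGraph V) (f : ℕ → V) : Prop :=
  Function.Injective f ∧ ∀ n, G.Adj (f n) (f (n + 1))

/-- The ray `f` has a tail inside the vertex set `C`. -/
def HasTailIn (f : ℕ → V) (C : Set V) : Prop := ∃ N, ∀ n, N ≤ n → f n ∈ C

/-- Two rays are equivalent (belong to the same end) iff no finite vertex set
separates them: for every finite `S` they have tails in a common component of `G - S`. -/
def RayEquiv (G : SimpleGraph V) (f g : ℕ → V) : Prop :=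
  ∀ S : Set V, S.Finite → ∃ C, IsCompOf G S C ∧ HasTailIn f C ∧ HasTailIn g C

/-- Abstract version of the structure of the graph `G` from Theorem 3: there is a
height function `h` and a set `Sub` of subdividing vertices such that every edge is
vertical (heights differing by one) or horizontal (equal heights, with a subdividing
endvertex); every vertex has at most one strictly lower neighbour; and every
subdividing vertex has at most two neighbours that do not lie strictly above it.
Then every finite nonempty subgraph `H` of `G` has a vertex `v` of degree at most 2 in `H`:
taking `v` of maximal height, either `v` lies on a horizontal edge `vw` of `H` and then
`v` or `w` has degree at most 2, or else `v` has degree at most 1. -/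
theorem stmt7 (G : SimpleGraph V) (hG : LocFin G)
    (h : V → ℕ) (Sub : Set V)
    (hedges : ∀ v w, G.Adj v w →
      h w = h v + 1 ∨ h v = h w + 1 ∨ (h v = h w ∧ (v ∈ Sub ∨ w ∈ Sub)))
    (hdown : ∀ v, {w | G.Adj v w ∧ h w < h v}.Subsingleton)
    (hsub : ∀ s ∈ Sub, {w | G.Adj s w ∧ h w ≠ h s + 1}.ncard ≤ 2)
    (H : G.Subgraph) (hfin : H.verts.Finite) (hne : H.verts.Nonempty) :
    ∃ v ∈ H.verts, (H.neighborSet v).ncard ≤ 2 := by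
  obtain ⟨v, hv, hmax'⟩ := Set.Finite.exists_maximalFor h _ hfin hne
  have hmax : ∀ u ∈ H.verts, h u ≤ h v := by
    intro u hu
    by_contra hlt
    push_neg at hlt
    exact absurd (hmax' (j := u) hu hlt.le) (by omega)
  have keysub : ∀ s, s ∈ H.verts → s ∈ Sub → h s = h v →
      (H.neighborSet s).ncard ≤ 2 := by
    intro s hsv hsS hsh
    have hsubset : H.neighborSet s ⊆ {u | G.Adj s u ∧ h u ≠ h s + 1} := by
      intro u hu
      refine ⟨H.adj_sub hu, ?_⟩
      have := hmax u hu.snd_mem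
      omega
    have hfin' : {u | G.Adj s u ∧ h u ≠ h s + 1}.Finite :=
      (hG s).subset (fun u hu => hu.1)
    exact le_trans (Set.ncard_le_ncard hsubset hfin') (hsub s hsS)
  by_cases hhor : ∃ w, H.Adj v w ∧ h w = h v
  · obtain ⟨w, hvw, hw⟩ := hhor
    rcases hedges v w (H.adj_sub hvw) with h1 | h1 | ⟨h1, hS | hS⟩
    · omega
    · omega
    · exact ⟨v, hv, keysub v hv hS rfl⟩
    · exact ⟨w, hvw.snd_mem, keysub w hvw.snd_mem hS hw⟩
  · push_neg at hhor
    refine ⟨v, hv, ?_⟩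
    have hsubset : H.neighborSet v ⊆ {u | G.Adj v u ∧ h u < h v} := by
      intro u hu
      refine ⟨H.adj_sub hu, ?_⟩
      have h1 := hmax u hu.snd_mem
      have h2 := hhor u hu
      rcases hedges v u (H.adj_sub hu) with e | e | ⟨e, _⟩ <;> omega
    have hss : (H.neighborSet v).Subsingleton := (hdown v).anti hsubset
    calc (H.neighborSet v).ncard ≤ 1 := (Set.ncard_le_one_iff (hfin.subset fun u hu => hu.snd_mem)).mpr fun ha hb => hss ha hb
      _ ≤ 2 := by omega
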